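/- The category Setp of sets and partial functions, with monoidal structure given by disjoint union (coproduct), is a traced symmetric monoidal category: there is a trace operator sending a partial function f : X + U → Y + U to a partial function Tr(f) : X → Y defined by iterated feedback through U (Tr(f)(x) = y iff there is a finite sequence x, u₁, …, uₙ, y with f(x) = u₁ or f(x)=y, f(uᵢ) = u_{i+1}, f(uₙ) = y), satisfying the trace axioms (naturality in X and Y, dinaturality in U, vanishing, superposing and yanking). -/

import Mathlib

namespace SetpTrace

/-- Disjoint union (coproduct) of partial functions: the tensor of `Setp`
on morphisms. -/
def psum {α β γ δ : Type} (f : α →. β) (g : γ →. δ) : α ⊕ γ →. β ⊕ δ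
  | .inl a => (f a).map Sum.inl
  | .inr c => (g c).map Sum.inr

/-- A total function viewed as a partial function. -/
def pfn {α β : Type} (g : α → β) : α →. β := PFun.lift g

/-- The feedback relation: `traceRel f x y` holds iff there is a finite sequence
`x, u₁, …, uₙ, y` with `f x = inr u₁` (or directly `f x = inl y`),
`f uᵢ = inr uᵢ₊₁`, and `f uₙ = inl y`. -/
def traceRel {X U Y : Type} (f : X ⊕ U →. Y ⊕ U) (x : X) (y : Y) : Prop :=
  ∃ a : X ⊕ U,
    Relation.ReflTransGen (fun p q => ∃ u, Sum.inr u ∈ f p ∧ q = Sum.inr u) (Sum.inl x) a ∧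
    Sum.inl y ∈ f a

/-- The trace (iterated feedback) of a partial function `f : X + U →. Y + U`. -/
noncomputable def trace {X U Y : Type} (f : X ⊕ U →. Y ⊕ U) : X →. Y :=
  fun x => ⟨∃ y, traceRel f x y, fun h => Classical.choose h⟩

/- basic membership lemmas -/
@[simp] lemma mem_pfn {α β : Type} (g : α → β) (a : α) (b : β) :
    b ∈ pfn g a ↔ b = g a := by
  simp [pfn, PFun.lift, Part.mem_some_iff]

@[simp] lemma mem_psum_inl {α β γ δ : Type} (f : α →. β) (g : γ →. δ) (a : α) (b : β ⊕ δ) :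
    b ∈ psum f g (Sum.inl a) ↔ ∃ b', b' ∈ f a ∧ b = Sum.inl b' := by
  simp [psum, Part.mem_map_iff, eq_comm]

@[simp] lemma mem_psum_inr {α β γ δ : Type} (f : α →. β) (g : γ →. δ) (c : γ) (b : β ⊕ δ) :
    b ∈ psum f g (Sum.inr c) ↔ ∃ b', b' ∈ g c ∧ b = Sum.inr b' := by
  simp [psum, Part.mem_map_iff, eq_comm]

@[simp] lemma mem_pcomp {α β γ : Type} (f : β →. γ) (g : α →. β) (a : α) (c : γ) :
    c ∈ f.comp g a ↔ ∃ b, b ∈ g a ∧ c ∈ f b := by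
  rw [PFun.comp_apply]; exact Part.mem_bind_iff

/-- Feedback chains through `U`, as an inductive predicate. -/
inductive Reach {X U Y : Type} (f : X ⊕ U →. Y ⊕ U) : U → Y → Prop
  | last {u y} : Sum.inl y ∈ f (Sum.inr u) → Reach f u y
  | step {u u' y} : Sum.inr u' ∈ f (Sum.inr u) → Reach f u' y → Reach f u y

lemma reach_chain {X U Y : Type} {f : X ⊕ U →. Y ⊕ U} {u : U} {y : Y}
    (hr : Reach f u y) : ∃ a, Relation.ReflTransGen
      (fun p q => ∃ u, Sum.inr u ∈ f p ∧ q = Sum.inr u) (Sum.inr u : X ⊕ U) a ∧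
      Sum.inl y ∈ f a := by
  induction hr with
  | last h => exact ⟨_, Relation.ReflTransGen.refl, h⟩
  | step h _ ih =>
    obtain ⟨a, ha, hla⟩ := ih
    exact ⟨a, Relation.ReflTransGen.head ⟨_, h, rfl⟩ ha, hla⟩

lemma traceRel_iff {X U Y : Type} (f : X ⊕ U →. Y ⊕ U) (x : X) (y : Y) :
    traceRel f x y ↔
      Sum.inl y ∈ f (Sum.inl x) ∨ ∃ u, Sum.inr u ∈ f (Sum.inl x) ∧ Reach f u y := by
  constructor
  · rintro ⟨a, hchain, hlast⟩
    -- generalized claim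
    suffices H : ∀ p : X ⊕ U, Relation.ReflTransGen
        (fun p q => ∃ u, Sum.inr u ∈ f p ∧ q = Sum.inr u) p a →
        (Sum.inl y ∈ f p ∨ ∃ u, Sum.inr u ∈ f p ∧ Reach f u y) from H _ hchain
    intro p hp
    induction hp using Relation.ReflTransGen.head_induction_on with
    | refl => exact Or.inl hlast
    | head hstep _ ih =>
      obtain ⟨u, hu, rfl⟩ := hstep
      refine Or.inr ⟨u, hu, ?_⟩
      rcases ih with h | ⟨u', hu', hr⟩
      · exact Reach.last h
      · exact Reach.step hu' hr
  · rintro (h | ⟨u, hu, hr⟩)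
    · exact ⟨Sum.inl x, Relation.ReflTransGen.refl, h⟩
    · obtain ⟨a, ha, hla⟩ := reach_chain hr
      exact ⟨a, Relation.ReflTransGen.head ⟨u, hu, rfl⟩ ha, hla⟩

lemma Reach_unique {X U Y : Type} {f : X ⊕ U →. Y ⊕ U} {u : U} {y y' : Y}
    (h : Reach f u y) (h' : Reach f u y') : y = y' := by
  induction h generalizing y' with
  | last h1 =>
    cases h' with
    | last h2 => exact Sum.inl.inj (Part.mem_unique h1 h2)
    | step h2 _ => exact absurd (Part.mem_unique h1 h2) (by simp)
  | step h1 _ ih =>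
    cases h' with
    | last h2 => exact absurd (Part.mem_unique h1 h2) (by simp)
    | step h2 hr2 => cases Sum.inr.inj (Part.mem_unique h1 h2); exact ih hr2

lemma traceRel_unique {X U Y : Type} {f : X ⊕ U →. Y ⊕ U} {x : X} {y y' : Y}
    (h : traceRel f x y) (h' : traceRel f x y') : y = y' := by
  rw [traceRel_iff] at h h'
  rcases h with h | ⟨u, hu, hr⟩ <;> rcases h' with h' | ⟨u', hu', hr'⟩
  · exact Sum.inl.inj (Part.mem_unique h h')
  · exact absurd (Part.mem_unique h hu') (by simp)
  · exact absurd (Part.mem_unique hu h') (by simp)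
  · cases Sum.inr.inj (Part.mem_unique hu hu'); exact Reach_unique hr hr'

lemma mem_trace {X U Y : Type} (f : X ⊕ U →. Y ⊕ U) (x : X) (y : Y) :
    y ∈ trace f x ↔ traceRel f x y := by
  constructor
  · rintro ⟨h, rfl⟩
    exact Classical.choose_spec h
  · intro h
    exact ⟨⟨y, h⟩, traceRel_unique (Classical.choose_spec ⟨y, h⟩) h⟩


section Axioms
open Sum

/-- If two functions agree (membership-wise) on `inr` arguments, Reach coincides. -/
lemma Reach_congr {X₁ X₂ U Y : Type} {f₁ : X₁ ⊕ U →. Y ⊕ U} {f₂ : X₂ ⊕ U →. Y ⊕ U}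
    (h : ∀ (u : U) (b : Y ⊕ U), b ∈ f₁ (inr u) ↔ b ∈ f₂ (inr u)) {u : U} {y : Y} :
    Reach f₁ u y ↔ Reach f₂ u y := by
  constructor <;> intro hr
  · induction hr with
    | last h1 => exact Reach.last ((h _ _).1 h1)
    | step h1 _ ih => exact Reach.step ((h _ _).1 h1) ih
  · induction hr with
    | last h1 => exact Reach.last ((h _ _).2 h1)
    | step h1 _ ih => exact Reach.step ((h _ _).2 h1) ih

lemma natX {X X' U Y : Type} (f : X ⊕ U →. Y ⊕ U) (g : X' →. X) :
    trace (f.comp (psum g (pfn (id : U → U)))) = (trace f).comp g := by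
  set h := f.comp (psum g (pfn (id : U → U))) with hh
  have hA : ∀ (u : U) (b : Y ⊕ U), b ∈ h (inr u) ↔ b ∈ f (inr u) := by
    intro u b; rw [hh, mem_pcomp]; simp
  have hB : ∀ (x' : X') (b : Y ⊕ U), b ∈ h (inl x') ↔ ∃ x, x ∈ g x' ∧ b ∈ f (inl x) := by
    intro x' b; rw [hh, mem_pcomp]; simp
  apply PFun.ext; intro x' y
  rw [mem_trace, mem_pcomp, traceRel_iff]
  constructor
  · rintro (h1 | ⟨u, hu, hr⟩)
    · obtain ⟨x, hx, h1⟩ := (hB _ _).1 h1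
      exact ⟨x, hx, (mem_trace f x y).2 ((traceRel_iff f x y).2 (Or.inl h1))⟩
    · obtain ⟨x, hx, hu⟩ := (hB _ _).1 hu
      exact ⟨x, hx, (mem_trace f x y).2 ((traceRel_iff f x y).2
        (Or.inr ⟨u, hu, (Reach_congr hA).1 hr⟩))⟩
  · rintro ⟨x, hx, hy⟩
    rcases (traceRel_iff f x y).1 ((mem_trace f x y).1 hy) with h1 | ⟨u, hu, hr⟩
    · exact Or.inl ((hB _ _).2 ⟨x, hx, h1⟩)
    · exact Or.inr ⟨u, (hB _ _).2 ⟨x, hx, hu⟩, (Reach_congr hA).2 hr⟩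

lemma natY {X U Y Y' : Type} (f : X ⊕ U →. Y ⊕ U) (g : Y →. Y') :
    trace ((psum g (pfn (id : U → U))).comp f) = g.comp (trace f) := by
  set h := (psum g (pfn (id : U → U))).comp f with hh
  have hA : ∀ (a : X ⊕ U) (u : U), inr u ∈ h a ↔ inr u ∈ f a := by
    intro a u
    simp only [hh, mem_pcomp]
    constructor
    · rintro ⟨c, hc, hc2⟩
      rcases c with y | u'
      · simp at hc2
      · simp at hc2; subst hc2; exact hc
    · intro hu; exact ⟨inr u, hu, by simp⟩
  have hB : ∀ (a : X ⊕ U) (y' : Y'), inl y' ∈ h a ↔ ∃ y, inl y ∈ f a ∧ y' ∈ g y := by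
    intro a y'
    simp only [hh, mem_pcomp]
    constructor
    · rintro ⟨c, hc, hc2⟩
      rcases c with y | u'
      · rw [mem_psum_inl] at hc2
        obtain ⟨b', hb', hb2⟩ := hc2
        cases hb2
        exact ⟨y, hc, hb'⟩
      · simp at hc2
    · rintro ⟨y, hy, hy'⟩; exact ⟨inl y, hy, by simp; exact hy'⟩
  have hR : ∀ (u : U) (y' : Y'), Reach h u y' ↔ ∃ y, Reach f u y ∧ y' ∈ g y := by
    intro u y'
    constructor
    · intro hr
      induction hr with
      | last h1 =>
        obtain ⟨y, hy, hy'⟩ := (hB _ _).1 h1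
        exact ⟨y, Reach.last hy, hy'⟩
      | step h1 _ ih =>
        obtain ⟨y, hy, hy'⟩ := ih
        exact ⟨y, Reach.step ((hA _ _).1 h1) hy, hy'⟩
    · rintro ⟨y, hr, hy'⟩
      induction hr with
      | last h1 => exact Reach.last ((hB _ _).2 ⟨_, h1, hy'⟩)
      | step h1 _ ih => exact Reach.step ((hA _ _).2 h1) (ih hy')
  apply PFun.ext; intro x y'
  rw [mem_trace, mem_pcomp, traceRel_iff]
  constructor
  · rintro (h1 | ⟨u, hu, hr⟩)
    · obtain ⟨y, hy, hy'⟩ := (hB _ _).1 h1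
      exact ⟨y, (mem_trace f x y).2 ((traceRel_iff f x y).2 (Or.inl hy)), hy'⟩
    · obtain ⟨y, hy, hy'⟩ := (hR _ _).1 hr
      exact ⟨y, (mem_trace f x y).2 ((traceRel_iff f x y).2
        (Or.inr ⟨u, (hA _ _).1 hu, hy⟩)), hy'⟩
  · rintro ⟨y, hy, hy'⟩
    rcases (traceRel_iff f x y).1 ((mem_trace f x y).1 hy) with h1 | ⟨u, hu, hr⟩
    · exact Or.inl ((hB _ _).2 ⟨y, h1, hy'⟩)
    · exact Or.inr ⟨u, (hA _ _).2 hu, (hR _ _).2 ⟨y, hr, hy'⟩⟩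

lemma yank (U : Type) : trace (pfn (Sum.swap : U ⊕ U → U ⊕ U)) = pfn (id : U → U) := by
  apply PFun.ext; intro u y
  rw [mem_trace, traceRel_iff]
  have hreach : ∀ u' y', Reach (pfn (Sum.swap : U ⊕ U → U ⊕ U)) u' y' → y' = u' := by
    intro u' y' hr
    cases hr with
    | last h1 => simpa [Sum.swap] using h1
    | step h1 _ => simp [Sum.swap] at h1
  simp only [mem_pfn]
  constructor
  · rintro (h1 | ⟨u', hu', hr⟩)
    · simp [Sum.swap] at h1
    · simp [Sum.swap] at hu'
      subst hu'
      simpa using hreach _ _ hr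
  · rintro rfl
    exact Or.inr ⟨y, by simp [Sum.swap], Reach.last (by simp [Sum.swap])⟩

lemma vanish_unit {X Y : Type} (f : X ⊕ Empty →. Y ⊕ Empty) :
    trace f = (pfn (Sum.elim id Empty.elim)).comp (f.comp (pfn Sum.inl)) := by
  apply PFun.ext; intro x y
  rw [mem_trace, traceRel_iff]
  constructor
  · rintro (h1 | ⟨u, _, _⟩)
    · rw [mem_pcomp]
      refine ⟨inl y, ?_, by simp⟩
      rw [mem_pcomp]
      exact ⟨inl x, by simp, h1⟩
    · exact u.elim
  · rw [mem_pcomp]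
    rintro ⟨c, hc, h2⟩
    rw [mem_pcomp] at hc
    obtain ⟨b, hb, hc2⟩ := hc
    simp only [mem_pfn] at hb
    subst hb
    rcases c with y' | u
    · simp only [mem_pfn] at h2
      simp only [Sum.elim_inl, id_eq] at h2
      subst h2
      exact Or.inl hc2
    · exact u.elim

lemma dinat {X U U' Y : Type} (f : X ⊕ U →. Y ⊕ U') (g : U' →. U) :
    trace ((psum (pfn (id : Y → Y)) g).comp f)
      = trace (f.comp (psum (pfn (id : X → X)) g)) := by
  set h1 := (psum (pfn (id : Y → Y)) g).comp f with hh1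
  set h2 := f.comp (psum (pfn (id : X → X)) g) with hh2
  have h1A : ∀ (a : X ⊕ U) (y : Y), inl y ∈ h1 a ↔ inl y ∈ f a := by
    intro a y
    simp only [hh1, mem_pcomp]
    constructor
    · rintro ⟨c, hc, hc2⟩
      rcases c with y' | u'
      · rw [mem_psum_inl] at hc2
        obtain ⟨b', hb', hb2⟩ := hc2
        simp only [mem_pfn, id_eq] at hb'
        subst hb'
        cases hb2
        exact hc
      · rw [mem_psum_inr] at hc2
        obtain ⟨b', _, hb2⟩ := hc2
        cases hb2
    · intro hy
      exact ⟨inl y, hy, by simp⟩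
  have h1B : ∀ (a : X ⊕ U) (u : U), inr u ∈ h1 a ↔ ∃ u', inr u' ∈ f a ∧ u ∈ g u' := by
    intro a u
    simp only [hh1, mem_pcomp]
    constructor
    · rintro ⟨c, hc, hc2⟩
      rcases c with y' | u'
      · rw [mem_psum_inl] at hc2
        obtain ⟨b', _, hb2⟩ := hc2
        cases hb2
      · rw [mem_psum_inr] at hc2
        obtain ⟨b', hb', hb2⟩ := hc2
        cases hb2
        exact ⟨u', hc, hb'⟩
    · rintro ⟨u', hu', hg⟩
      refine ⟨inr u', hu', ?_⟩
      rw [mem_psum_inr]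
      exact ⟨u, hg, rfl⟩
  have h2X : ∀ (x : X) (b : Y ⊕ U'), b ∈ h2 (inl x) ↔ b ∈ f (inl x) := by
    intro x b; rw [hh2, mem_pcomp]; simp
  have h2U : ∀ (u' : U') (b : Y ⊕ U'), b ∈ h2 (inr u') ↔ ∃ u, u ∈ g u' ∧ b ∈ f (inr u) := by
    intro u' b; rw [hh2, mem_pcomp]; simp
  have D1 : ∀ {u : U} {y : Y}, Reach h1 u y → ∀ u', u ∈ g u' → Reach h2 u' y := by
    intro u y hr
    induction hr with
    | last hl =>
      intro u' hg
      refine Reach.last ((h2U _ _).2 ⟨_, hg, (h1A _ _).1 hl⟩)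
    | step hs _ ih =>
      intro u' hg
      obtain ⟨u1', hu1', hg1⟩ := (h1B _ _).1 hs
      exact Reach.step ((h2U _ _).2 ⟨_, hg, hu1'⟩) (ih _ hg1)
  have D2 : ∀ {u' : U'} {y : Y}, Reach h2 u' y → ∃ u, u ∈ g u' ∧ Reach h1 u y := by
    intro u' y hr
    induction hr with
    | last hl =>
      obtain ⟨u, hg, hf⟩ := (h2U _ _).1 hl
      exact ⟨u, hg, Reach.last ((h1A _ _).2 hf)⟩
    | step hs _ ih =>
      obtain ⟨u, hg, hf⟩ := (h2U _ _).1 hs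
      obtain ⟨u1, hg1, hr1⟩ := ih
      exact ⟨u, hg, Reach.step ((h1B _ _).2 ⟨_, hf, hg1⟩) hr1⟩
  apply PFun.ext; intro x y
  rw [mem_trace, mem_trace, traceRel_iff, traceRel_iff]
  constructor
  · rintro (hl | ⟨u, hu, hr⟩)
    · exact Or.inl ((h2X _ _).2 ((h1A _ _).1 hl))
    · obtain ⟨u', hu', hg⟩ := (h1B _ _).1 hu
      exact Or.inr ⟨u', (h2X _ _).2 hu', D1 hr _ hg⟩
  · rintro (hl | ⟨u', hu', hr⟩)
    · exact Or.inl ((h1A _ _).2 ((h2X _ _).1 hl))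
    · obtain ⟨u, hg, hr1⟩ := D2 hr
      exact Or.inr ⟨u, (h1B _ _).2 ⟨u', (h2X _ _).1 hu', hg⟩, hr1⟩

lemma superpose {W X U Y : Type} (f : X ⊕ U →. Y ⊕ U) :
    trace ((pfn (Equiv.sumAssoc W Y U).symm).comp
      ((psum (pfn (id : W → W)) f).comp (pfn (Equiv.sumAssoc W X U))))
      = psum (pfn (id : W → W)) (trace f) := by
  set h := (pfn (Equiv.sumAssoc W Y U).symm).comp
      ((psum (pfn (id : W → W)) f).comp (pfn (Equiv.sumAssoc W X U))) with hh
  have hmem : ∀ (a : (W ⊕ X) ⊕ U) (b : (W ⊕ Y) ⊕ U),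
      b ∈ h a ↔ (Equiv.sumAssoc W Y U) b ∈ psum (pfn (id : W → W)) f ((Equiv.sumAssoc W X U) a) := by
    intro a b
    simp only [hh, mem_pcomp, mem_pfn]
    constructor
    · rintro ⟨c, ⟨d, rfl, hc⟩, rfl⟩
      simpa using hc
    · intro hb
      exact ⟨_, ⟨_, rfl, hb⟩, by simp⟩
  have hW : ∀ (w : W) (b : (W ⊕ Y) ⊕ U), b ∈ h (inl (inl w)) ↔ b = inl (inl w) := by
    intro w b
    rw [hmem]
    simp only [Equiv.sumAssoc_apply_inl_inl, mem_psum_inl, mem_pfn, id_eq]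
    constructor
    · rintro ⟨b', rfl, hb⟩
      have : b = (Equiv.sumAssoc W Y U).symm (inl b') := by
        rw [← hb]; simp
      simpa using this
    · rintro rfl
      exact ⟨w, rfl, by simp⟩
  have key : ∀ (p : X ⊕ U) (q : (W ⊕ X) ⊕ U), (Equiv.sumAssoc W X U) q = inr p →
      ∀ (b : (W ⊕ Y) ⊕ U), b ∈ h q ↔
        ((∃ y, inl y ∈ f p ∧ b = inl (inr y)) ∨ (∃ u, inr u ∈ f p ∧ b = inr u)) := by
    intro p q hq b
    rw [hmem, hq, mem_psum_inr]
    constructor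
    · rintro ⟨d, hd, hb⟩
      have hb' : b = (Equiv.sumAssoc W Y U).symm (inr d) := by
        rw [← hb]; simp
      rcases d with y | u
      · exact Or.inl ⟨y, hd, by simpa using hb'⟩
      · exact Or.inr ⟨u, hd, by simpa using hb'⟩
    · rintro (⟨y, hy, rfl⟩ | ⟨u, hu, rfl⟩)
      · exact ⟨inl y, hy, by simp⟩
      · exact ⟨inr u, hu, by simp⟩
  have hX : ∀ (x : X) (b : (W ⊕ Y) ⊕ U), b ∈ h (inl (inr x)) ↔
      ((∃ y, inl y ∈ f (inl x) ∧ b = inl (inr y)) ∨ (∃ u, inr u ∈ f (inl x) ∧ b = inr u)) :=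
    fun x b => key (inl x) (inl (inr x)) (by simp) b
  have hU : ∀ (u0 : U) (b : (W ⊕ Y) ⊕ U), b ∈ h (inr u0) ↔
      ((∃ y, inl y ∈ f (inr u0) ∧ b = inl (inr y)) ∨ (∃ u, inr u ∈ f (inr u0) ∧ b = inr u)) :=
    fun u0 b => key (inr u0) (inr u0) (by simp) b
  have hR : ∀ (u : U) (z : W ⊕ Y), Reach h u z ↔ ∃ y, Reach f u y ∧ z = inr y := by
    intro u z
    constructor
    · intro hr
      induction hr with
      | last hl =>
        rcases (hU _ _).1 hl with ⟨y, hy, hz⟩ | ⟨u', _, hz⟩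
        · cases hz; exact ⟨y, Reach.last hy, rfl⟩
        · cases hz
      | step hs _ ih =>
        rcases (hU _ _).1 hs with ⟨y, _, hz⟩ | ⟨u', hu', hz⟩
        · cases hz
        · cases hz
          obtain ⟨y, hy, rfl⟩ := ih
          exact ⟨y, Reach.step hu' hy, rfl⟩
    · rintro ⟨y, hr, rfl⟩
      induction hr with
      | last hl => exact Reach.last ((hU _ _).2 (Or.inl ⟨_, hl, rfl⟩))
      | step hs _ ih => exact Reach.step ((hU _ _).2 (Or.inr ⟨_, hs, rfl⟩)) ih
  apply PFun.ext; intro a z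
  rcases a with w | x
  · rw [mem_trace, traceRel_iff, mem_psum_inl]
    simp only [mem_pfn, id_eq]
    constructor
    · rintro (hl | ⟨u, hu, _⟩)
      · rw [hW] at hl
        cases hl
        exact ⟨w, rfl, rfl⟩
      · rw [hW] at hu
        cases hu
    · rintro ⟨w', rfl, rfl⟩
      exact Or.inl ((hW _ _).2 rfl)
  · rw [mem_trace, traceRel_iff, mem_psum_inr]
    constructor
    · rintro (hl | ⟨u, hu, hr⟩)
      · rcases (hX _ _).1 hl with ⟨y, hy, hz⟩ | ⟨u', _, hz⟩
        · cases hz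
          exact ⟨y, (mem_trace f x y).2 ((traceRel_iff f x y).2 (Or.inl hy)), rfl⟩
        · cases hz
      · rcases (hX _ _).1 hu with ⟨y, _, hz⟩ | ⟨u', hu', hz⟩
        · cases hz
        · cases hz
          obtain ⟨y, hy, rfl⟩ := (hR _ _).1 hr
          exact ⟨y, (mem_trace f x y).2 ((traceRel_iff f x y).2 (Or.inr ⟨_, hu', hy⟩)), rfl⟩
    · rintro ⟨y, hy, rfl⟩
      rcases (traceRel_iff f x y).1 ((mem_trace f x y).1 hy) with hl | ⟨u, hu, hr⟩
      · exact Or.inl ((hX _ _).2 (Or.inl ⟨y, hl, rfl⟩))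
      · exact Or.inr ⟨u, (hX _ _).2 (Or.inr ⟨u, hu, rfl⟩), (hR _ _).2 ⟨y, hr, rfl⟩⟩

section VanishTensor

variable {X U V Y : Type} (f : X ⊕ (U ⊕ V) →. Y ⊕ (U ⊕ V))

/-- The reassociated function. -/
noncomputable def fr : (X ⊕ U) ⊕ V →. (Y ⊕ U) ⊕ V :=
  (pfn (Equiv.sumAssoc Y U V).symm).comp (f.comp (pfn (Equiv.sumAssoc X U V)))

lemma mem_fr (a : (X ⊕ U) ⊕ V) (b : (Y ⊕ U) ⊕ V) :
    b ∈ fr f a ↔ (Equiv.sumAssoc Y U V) b ∈ f ((Equiv.sumAssoc X U V) a) := by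
  simp only [fr, mem_pcomp, mem_pfn]
  constructor
  · rintro ⟨c, ⟨d, rfl, hc⟩, rfl⟩
    simpa using hc
  · intro hb
    exact ⟨_, ⟨_, rfl, hb⟩, by simp⟩

/-- Key lemma B : a `fr`-reach through `V` yields an `f`-reach. -/
lemma lemB {v : V} {c : Y ⊕ U} (hr : Reach (fr f) v c) :
    ∀ y : Y, (∀ y', c = inl y' → y' = y) → (∀ u, c = inr u → Reach f (inl u) y) →
    Reach f (inr v) y := by
  induction hr with
  | @last v0 c0 hl =>
    intro y hy hu
    rw [mem_fr] at hl
    rcases c0 with y' | u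
    · simp only [Equiv.sumAssoc_apply_inl_inl, Equiv.sumAssoc_apply_inr] at hl
      cases hy y' rfl
      exact Reach.last hl
    · simp only [Equiv.sumAssoc_apply_inl_inr, Equiv.sumAssoc_apply_inr] at hl
      exact Reach.step hl (hu u rfl)
  | step hs _ ih =>
    intro y hy hu
    rw [mem_fr] at hs
    simp only [Equiv.sumAssoc_apply_inr] at hs
    exact Reach.step hs (ih y hy hu)

lemma lemB1 {v : V} {y : Y} (hr : Reach (fr f) v (inl y)) : Reach f (inr v) y :=
  lemB f hr y (fun y' h => (Sum.inl.inj h).symm) (fun u h => by cases h)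

lemma lemB2 {v : V} {u : U} {y : Y} (hr : Reach (fr f) v (inr u))
    (h2 : Reach f (inl u) y) : Reach f (inr v) y :=
  lemB f hr y (fun y' h => by cases h) (fun u' h => by cases Sum.inr.inj h; exact h2)

lemma mem_trfr (a : X ⊕ U) (c : Y ⊕ U) :
    c ∈ trace (fr f) a ↔
      (Equiv.sumAssoc Y U V) (inl c) ∈ f ((Equiv.sumAssoc X U V) (inl a)) ∨
      ∃ v, inr (inr v) ∈ f ((Equiv.sumAssoc X U V) (inl a)) ∧ Reach (fr f) v c := by
  rw [mem_trace, traceRel_iff]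
  constructor
  · rintro (hl | ⟨v, hv, hrv⟩)
    · rw [mem_fr] at hl; exact Or.inl hl
    · rw [mem_fr] at hv
      simp only [Equiv.sumAssoc_apply_inr] at hv
      exact Or.inr ⟨v, hv, hrv⟩
  · rintro (hl | ⟨v, hv, hrv⟩)
    · exact Or.inl ((mem_fr f _ _).2 hl)
    · refine Or.inr ⟨v, (mem_fr f _ _).2 ?_, hrv⟩
      simpa using hv
  
lemma lemB3 {u : U} {y : Y} (hr : Reach (trace (fr f)) u y) : Reach f (inl u) y := by
  induction hr with
  | last hl =>
    rw [mem_trfr] at hl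
    simp only [Equiv.sumAssoc_apply_inl_inl, Equiv.sumAssoc_apply_inl_inr] at hl
    rcases hl with hl | ⟨v, hv, hrv⟩
    · exact Reach.last hl
    · exact Reach.step hv (lemB1 f hrv)
  | step hs _ ih =>
    rw [mem_trfr] at hs
    simp only [Equiv.sumAssoc_apply_inl_inl, Equiv.sumAssoc_apply_inl_inr] at hs
    rcases hs with hs | ⟨v, hv, hrv⟩
    · exact Reach.step hs ih
    · exact Reach.step hv (lemB2 f hrv ih)

lemma lemF {w : U ⊕ V} {y : Y} (hr : Reach f w y) :
    (∀ u, w = inl u → Reach (trace (fr f)) u y) ∧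
    (∀ v, w = inr v → (Reach (fr f) v (inl y) ∨
      ∃ u, Reach (fr f) v (inr u) ∧ Reach (trace (fr f)) u y)) := by
  induction hr with
  | last hl =>
    constructor
    · rintro u rfl
      refine Reach.last ((mem_trfr f _ _).2 (Or.inl ?_))
      simpa using hl
    · rintro v rfl
      refine Or.inl (Reach.last ((mem_fr f _ _).2 ?_))
      simpa using hl
  | @step w w' yy hs _ ih =>
    constructor
    · rintro u rfl
      rcases w' with u1 | v1
      · refine Reach.step ((mem_trfr f _ _).2 (Or.inl ?_)) (ih.1 u1 rfl)
        simpa using hs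
      · rcases ih.2 v1 rfl with hrv | ⟨u1, hrv, hrg⟩
        · refine Reach.last ((mem_trfr f _ _).2 (Or.inr ⟨v1, ?_, hrv⟩))
          simpa using hs
        · refine Reach.step ((mem_trfr f _ _).2 (Or.inr ⟨v1, ?_, hrv⟩)) hrg
          simpa using hs
    · rintro v rfl
      rcases w' with u1 | v1
      · refine Or.inr ⟨u1, Reach.last ((mem_fr f _ _).2 ?_), ih.1 u1 rfl⟩
        simpa using hs
      · have hstep : inr v1 ∈ fr f (inr v) := by
          rw [mem_fr]; simpa using hs
        rcases ih.2 v1 rfl with hrv | ⟨u1, hrv, hrg⟩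
        · exact Or.inl (Reach.step hstep hrv)
        · exact Or.inr ⟨u1, Reach.step hstep hrv, hrg⟩

lemma vanish_tensor : trace f = trace (trace (fr f)) := by
  apply PFun.ext; intro x y
  rw [mem_trace, mem_trace, traceRel_iff, traceRel_iff]
  constructor
  · rintro (hl | ⟨w, hw, hr⟩)
    · refine Or.inl ((mem_trfr f _ _).2 (Or.inl (by simpa using hl)))
    · rcases w with u | v
      · refine Or.inr ⟨u, (mem_trfr f _ _).2 (Or.inl (by simpa using hw)), (lemF f hr).1 u rfl⟩
      · rcases (lemF f hr).2 v rfl with hrv | ⟨u, hrv, hrg⟩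
        · exact Or.inl ((mem_trfr f _ _).2 (Or.inr ⟨v, by simpa using hw, hrv⟩))
        · exact Or.inr ⟨u, (mem_trfr f _ _).2 (Or.inr ⟨v, by simpa using hw, hrv⟩), hrg⟩
  · rintro (hl | ⟨u, hu, hrg⟩)
    · rw [mem_trfr] at hl
      simp only [Equiv.sumAssoc_apply_inl_inl] at hl
      rcases hl with hl | ⟨v, hv, hrv⟩
      · exact Or.inl hl
      · exact Or.inr ⟨inr v, hv, lemB1 f hrv⟩
    · rw [mem_trfr] at hu
      simp only [Equiv.sumAssoc_apply_inl_inl, Equiv.sumAssoc_apply_inl_inr] at hu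
      rcases hu with hu | ⟨v, hv, hrv⟩
      · exact Or.inr ⟨inl u, hu, lemB3 f hrg⟩
      · exact Or.inr ⟨inr v, hv, lemB2 f hrv (lemB3 f hrg)⟩

end VanishTensor

end Axioms

/-- `Setp` (sets and partial functions, with disjoint union as
tensor) is traced symmetric monoidal: the feedback operator `trace` satisfies the
Joyal–Street–Verity axioms: naturality in `X` and `Y`, dinaturality in `U`,
vanishing (both forms), superposing and yanking. -/
theorem statement3 :
    -- the trace relation is indeed the graph of `trace`
    (∀ (X U Y : Type) (f : X ⊕ U →. Y ⊕ U) (x : X) (y : Y),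
        y ∈ trace f x ↔ traceRel f x y) ∧
    -- naturality in X
    (∀ (X X' U Y : Type) (f : X ⊕ U →. Y ⊕ U) (g : X' →. X),
        trace (f.comp (psum g (pfn (id : U → U)))) = (trace f).comp g) ∧
    -- naturality in Y
    (∀ (X U Y Y' : Type) (f : X ⊕ U →. Y ⊕ U) (g : Y →. Y'),
        trace ((psum g (pfn (id : U → U))).comp f) = g.comp (trace f)) ∧
    -- dinaturality in U
    (∀ (X U U' Y : Type) (f : X ⊕ U →. Y ⊕ U') (g : U' →. U),
        trace ((psum (pfn (id : Y → Y)) g).comp f)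
          = trace (f.comp (psum (pfn (id : X → X)) g))) ∧
    -- vanishing (unit)
    (∀ (X Y : Type) (f : X ⊕ Empty →. Y ⊕ Empty),
        trace f = (pfn (Sum.elim id Empty.elim)).comp (f.comp (pfn Sum.inl))) ∧
    -- vanishing (tensor)
    (∀ (X U V Y : Type) (f : X ⊕ (U ⊕ V) →. Y ⊕ (U ⊕ V)),
        trace f = trace (trace
          ((pfn (Equiv.sumAssoc Y U V).symm).comp
            (f.comp (pfn (Equiv.sumAssoc X U V))))) ) ∧
    -- superposing
    (∀ (W X U Y : Type) (f : X ⊕ U →. Y ⊕ U),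
        trace ((pfn (Equiv.sumAssoc W Y U).symm).comp
          ((psum (pfn (id : W → W)) f).comp (pfn (Equiv.sumAssoc W X U))))
          = psum (pfn (id : W → W)) (trace f)) ∧
    -- yanking
    (∀ U : Type, trace (pfn (Sum.swap : U ⊕ U → U ⊕ U)) = pfn (id : U → U)) := by
  refine ⟨?_, ?_, ?_, ?_, ?_, ?_, ?_, ?_⟩
  · exact fun X U Y f x y => mem_trace f x y
  · exact fun X X' U Y f g => natX f g
  · exact fun X U Y Y' f g => natY f g
  · exact fun X U U' Y f g => dinat f g
  · exact fun X Y f => vanish_unit f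
  · exact fun X U V Y f => vanish_tensor f
  · exact fun W X U Y f => superpose f
  · exact yank

end SetpTrace
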